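/- Let 2 ≤ k ≤ n−2. Call a k-element subset of [n] = {1,…,n} frozen if it is a cyclic interval {i, i+1, …, i+k−1} (indices mod n) for some i, and nonfrozen otherwise. Suppose α : {1,…,k−1} × {1,…,n−k} → ℤ satisfies Σ_{j=1}^{n−k} α_{i,j} = 0 for every i ∈ {1,…,k−1}, and that for every nonfrozen k-element subset J = {j₁ < j₂ < ⋯ < j_k} of [n] one has Σ_{i=1}^{k−1} Σ_{j = j_i − (i−1)}^{j_{i+1} − i − 1} α_{i,j} > −1, where an inner sum over an empty index range is 0. Then α_{i,j} = 0 for all (i,j). -/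

import Mathlib

lemma aux_iso {n k : ℕ} (f : Fin k → Fin n) (hf : StrictMono f)
    (hJ : (Finset.image f Finset.univ).card = k) (r : Fin k) :
    (((Finset.image f Finset.univ).orderIsoOfFin hJ r : Fin n) : ℕ) = (f r : ℕ) := by
  rw [Finset.coe_orderIsoOfFin_apply]
  exact congrArg Fin.val
    (congrFun (Finset.orderEmbOfFin_unique hJ
      (fun x => Finset.mem_image_of_mem f (Finset.mem_univ x)) hf).symm r)

lemma aux_nf {n k : ℕ} (J : Finset (Fin n)) (a b : Fin n) (ha : a ∈ J) (hb : b ∈ J)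
    (hab : a ≠ b) (hpos : 0 < n)
    (ha' : (⟨((a : ℕ) + 1) % n, Nat.mod_lt _ hpos⟩ : Fin n) ∉ J)
    (hb' : (⟨((b : ℕ) + 1) % n, Nat.mod_lt _ hpos⟩ : Fin n) ∉ J) :
    ¬ ∃ i : Fin n, J = Finset.image
        (fun t : Fin k => (⟨(i.val + t.val) % n, Nat.mod_lt _ i.pos⟩ : Fin n))
        Finset.univ := by
  rintro ⟨i, rfl⟩
  have step : ∀ (x : Fin n), x ∈ Finset.image
      (fun t : Fin k => (⟨(i.val + t.val) % n, Nat.mod_lt _ i.pos⟩ : Fin n)) Finset.univ →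
      (⟨((x : ℕ) + 1) % n, Nat.mod_lt _ hpos⟩ : Fin n) ∉ Finset.image
      (fun t : Fin k => (⟨(i.val + t.val) % n, Nat.mod_lt _ i.pos⟩ : Fin n)) Finset.univ →
      ∃ tx : Fin k, (tx : ℕ) = k - 1 ∧
        (x : ℕ) = (i.val + (tx : ℕ)) % n := by
    intro x hx hnot
    obtain ⟨tx, -, htx⟩ := Finset.mem_image.mp hx
    refine ⟨tx, ?_, by rw [← htx]⟩
    by_contra hne
    have htx1 : (tx : ℕ) + 1 < k := by have := tx.isLt; omega
    apply hnot
    refine Finset.mem_image.mpr ⟨⟨(tx : ℕ) + 1, htx1⟩, Finset.mem_univ _, ?_⟩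
    apply Fin.ext
    show (i.val + ((tx : ℕ) + 1)) % n = ((x : ℕ) + 1) % n
    have hxv : (x : ℕ) = (i.val + (tx : ℕ)) % n := by rw [← htx]
    rw [hxv, Nat.mod_add_mod, Nat.add_assoc]
  obtain ⟨ta, hta, hva⟩ := step a ha ha'
  obtain ⟨tb, htb, hvb⟩ := step b hb hb'
  apply hab
  apply Fin.ext
  rw [hva, hvb, hta, htb]

lemma fam (n k : ℕ) (hk : 2 ≤ k) (hkn : k + 2 ≤ n)
    (α : ℕ → ℕ → ℤ)
    (hineq : ∀ (J : Finset (Fin n)) (hJ : J.card = k),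
      (¬ ∃ i : Fin n, J = Finset.image
          (fun t : Fin k => (⟨(i.val + t.val) % n, Nat.mod_lt _ i.pos⟩ : Fin n))
          Finset.univ) →
      -1 < ∑ i : Fin (k - 1),
        ∑ j ∈ Finset.Icc
            ((((J.orderIsoOfFin hJ ⟨i.val, lt_of_lt_of_le i.isLt (Nat.sub_le k 1)⟩ : Fin n) : ℕ) + 1)
              - i.val)
            (((((J.orderIsoOfFin hJ ⟨i.val + 1, Nat.add_lt_of_lt_sub i.isLt⟩ : Fin n) : ℕ) + 1)
              - (i.val + 1)) - 1),
          α (i.val + 1) j)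
    (i c d : ℕ) (hi1 : 1 ≤ i) (hi2 : i ≤ k - 1)
    (hcd : c < d) (hd : d ≤ n - k) (hw : 1 ≤ c ∨ d < n - k) :
    -1 < ∑ j ∈ Finset.Ioc c d, α i j := by
  have hbnd : ∀ r : Fin k, (if (r : ℕ) < i then (r : ℕ) + c else (r : ℕ) + d) < n := by
    intro r; have := r.isLt; split_ifs <;> omega
  set F : Fin k → Fin n := fun r => ⟨if (r : ℕ) < i then (r : ℕ) + c else (r : ℕ) + d,
    hbnd r⟩ with hF
  have hFv : ∀ r : Fin k, (F r : ℕ) = if (r : ℕ) < i then (r : ℕ) + c else (r : ℕ) + d :=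
    fun r => rfl
  have hmono : StrictMono F := by
    intro a b h
    rw [Fin.lt_def] at h ⊢
    rw [hFv, hFv]
    split_ifs <;> omega
  have hJ : (Finset.image F Finset.univ).card = k := by
    rw [Finset.card_image_of_injective _ hmono.injective, Finset.card_univ, Fintype.card_fin]
  -- the two "break" elements
  have hia : i - 1 < k := by omega
  have hib : k - 1 < k := by omega
  have hva : (F ⟨i - 1, hia⟩ : ℕ) = i - 1 + c := by
    show (if i - 1 < i then i - 1 + c else i - 1 + d) = i - 1 + c
    rw [if_pos (by omega)]
  have hvb : (F ⟨k - 1, hib⟩ : ℕ) = k - 1 + d := by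
    show (if k - 1 < i then k - 1 + c else k - 1 + d) = k - 1 + d
    rw [if_neg (by omega)]
  have hnotmem : ∀ (v : ℕ), (∀ r : ℕ, r < k →
      (if r < i then r + c else r + d) ≠ v % n) →
      (⟨v % n, Nat.mod_lt _ (show 0 < n by omega)⟩ : Fin n) ∉ Finset.image F Finset.univ := by
    intro v hv hmem
    obtain ⟨r, -, hr⟩ := Finset.mem_image.mp hmem
    have := congrArg Fin.val hr
    rw [hFv] at this
    exact hv r r.isLt this
  have hnf : ¬ ∃ i0 : Fin n, Finset.image F Finset.univ = Finset.image
      (fun t : Fin k => (⟨(i0.val + t.val) % n, Nat.mod_lt _ i0.pos⟩ : Fin n))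
      Finset.univ := by
    refine aux_nf _ (F ⟨i - 1, hia⟩) (F ⟨k - 1, hib⟩)
      (Finset.mem_image_of_mem _ (Finset.mem_univ _))
      (Finset.mem_image_of_mem _ (Finset.mem_univ _)) ?_ (by omega) ?_ ?_
    · intro h
      have := congrArg Fin.val h
      rw [hva, hvb] at this
      omega
    · rw [hva]
      have h1 : (i - 1 + c + 1) % n = i - 1 + c + 1 := Nat.mod_eq_of_lt (by omega)
      apply hnotmem
      intro r hr
      rw [h1]
      split_ifs <;> omega
    · rw [hvb]
      rcases hw with hw | hw
      · -- d could be n - k ; wrap case k - 1 + d + 1 = n when d = n - k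
        rcases Nat.lt_or_ge (k - 1 + d + 1) n with hlt | hge
        · have h1 : (k - 1 + d + 1) % n = k - 1 + d + 1 := Nat.mod_eq_of_lt hlt
          apply hnotmem
          intro r hr
          rw [h1]
          split_ifs <;> omega
        · have heq : k - 1 + d + 1 = n := by omega
          have h1 : (k - 1 + d + 1) % n = 0 := by rw [heq, Nat.mod_self]
          apply hnotmem
          intro r hr
          rw [h1]
          split_ifs <;> omega
      · have h1 : (k - 1 + d + 1) % n = k - 1 + d + 1 := Nat.mod_eq_of_lt (by omega)
        apply hnotmem
        intro r hr
        rw [h1]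
        split_ifs <;> omega
  have h := hineq (Finset.image F Finset.univ) hJ hnf
  have hiso := aux_iso F hmono hJ
  have hiso' : ∀ (p : ℕ) (hp : p < k),
      ((((Finset.image F Finset.univ).orderIsoOfFin hJ) ⟨p, hp⟩ : Fin n) : ℕ)
        = if p < i then p + c else p + d := fun p hp => (hiso ⟨p, hp⟩).trans rfl
  have hii : i - 1 < k - 1 := by omega
  rw [Fintype.sum_eq_single (⟨i - 1, hii⟩ : Fin (k - 1)) ?zero] at h
  case zero =>
    intro r hr
    have hp : (r : ℕ) ≠ i - 1 := fun hp => hr (Fin.ext hp)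
    have hrk : (r : ℕ) < k - 1 := r.isLt
    rw [hiso', hiso']
    split_ifs with h1 h2 h2 <;>
      rw [Finset.Icc_eq_empty (by omega), Finset.sum_empty]
  · rw [hiso', hiso'] at h
    rw [if_pos (by omega : i - 1 < i), if_neg (by omega : ¬ (i - 1 + 1 < i))] at h
    have e1 : i - 1 + c + 1 - (i - 1) = c + 1 := by omega
    have e2 : i - 1 + 1 + d + 1 - (i - 1 + 1) - 1 = d := by omega
    have e3 : i - 1 + 1 = i := by omega
    rw [e1, e2, e3] at h
    have hIoc : Finset.Ioc c d = Finset.Icc (c + 1) d := by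
      ext x; simp only [Finset.mem_Ioc, Finset.mem_Icc]; omega
    rw [hIoc]
    exact h

theorem stmt_12 (n k : ℕ) (hk : 2 ≤ k) (hkn : k + 2 ≤ n)
    (α : ℕ → ℕ → ℤ)
    (hrow : ∀ i ∈ Finset.Icc 1 (k - 1), ∑ j ∈ Finset.Icc 1 (n - k), α i j = 0)
    (hineq : ∀ (J : Finset (Fin n)) (hJ : J.card = k),
      (¬ ∃ i : Fin n, J = Finset.image
          (fun t : Fin k => (⟨(i.val + t.val) % n, Nat.mod_lt _ i.pos⟩ : Fin n))
          Finset.univ) →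
      -1 < ∑ i : Fin (k - 1),
        ∑ j ∈ Finset.Icc
            ((((J.orderIsoOfFin hJ ⟨i.val, by have := i.isLt; omega⟩ : Fin n) : ℕ) + 1)
              - i.val)
            (((((J.orderIsoOfFin hJ ⟨i.val + 1, by have := i.isLt; omega⟩ : Fin n) : ℕ) + 1)
              - (i.val + 1)) - 1),
          α (i.val + 1) j) :
    ∀ i ∈ Finset.Icc 1 (k - 1), ∀ j ∈ Finset.Icc 1 (n - k), α i j = 0 := by
  intro i hi j hj
  simp only [Finset.mem_Icc] at hi hj
  have h1 : ∀ m, 0 < m → m < n - k → 0 ≤ ∑ t ∈ Finset.Ioc 0 m, α i t := by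
    intro m hm1 hm2
    have := fam n k hk hkn α hineq i 0 m hi.1 hi.2 hm1 (le_of_lt hm2) (Or.inr hm2)
    omega
  have h2 : ∀ m, 0 < m → m < n - k → 0 ≤ ∑ t ∈ Finset.Ioc m (n - k), α i t := by
    intro m hm1 hm2
    have := fam n k hk hkn α hineq i m (n - k) hi.1 hi.2 hm2 le_rfl (Or.inl hm1)
    omega
  have hIcc : Finset.Icc 1 (n - k) = Finset.Ioc 0 (n - k) := by
    ext x; simp only [Finset.mem_Icc, Finset.mem_Ioc]; omega
  have hrowi : ∑ t ∈ Finset.Ioc 0 (n - k), α i t = 0 := by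
    rw [← hIcc]; exact hrow i (Finset.mem_Icc.mpr hi)
  have hAm : ∀ m, m ≤ n - k → ∑ t ∈ Finset.Ioc 0 m, α i t = 0 := by
    intro m hm
    rcases Nat.eq_zero_or_pos m with rfl | hm0
    · simp
    rcases eq_or_lt_of_le hm with rfl | hmlt
    · exact hrowi
    have hsplit : (∑ t ∈ Finset.Ioc 0 m, α i t) + ∑ t ∈ Finset.Ioc m (n - k), α i t
        = ∑ t ∈ Finset.Ioc 0 (n - k), α i t :=
      Finset.sum_Ioc_consecutive _ (Nat.zero_le m) (le_of_lt hmlt)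
    have := h1 m hm0 hmlt
    have := h2 m hm0 hmlt
    omega
  obtain ⟨j', rfl⟩ : ∃ j', j = j' + 1 := ⟨j - 1, by omega⟩
  have e1 := hAm (j' + 1) hj.2
  have e2 := hAm j' (by omega)
  have e3 : ∑ t ∈ Finset.Ioc 0 (j' + 1), α i t
      = (∑ t ∈ Finset.Ioc 0 j', α i t) + α i (j' + 1) :=
    Finset.sum_Ioc_succ_top (Nat.zero_le _) _
  omega
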